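/- Let G be a d_min–d_max bounded-degree graph (every vertex has degree in [d_min, d_max]) with normalized Laplacian second eigenvalue λ₂(G) ≥ 9/10, and let G^I be the graph obtained from G by adding self-loops to every vertex so that every vertex has degree exactly d_max (a self-loop adds 1 to the degree). Then the second smallest eigenvalue of the normalized Laplacian of G^I satisfies λ₂(G^I) ≥ (1/8)·(d_min/d_max)². -/

import Mathlib

open Finset

/-- Normalized Laplacian `L = I − D^{-1/2} A D^{-1/2}` of a finite simple graph. -/
noncomputable def normLap {V : Type*} [Fintype V] [DecidableEq V]
    (G : SimpleGraph V) [DecidableRel G.Adj] : Matrix V V ℝ :=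
  let Dh : Matrix V V ℝ :=
    Matrix.diagonal fun v => if G.degree v = 0 then 0 else (Real.sqrt (G.degree v))⁻¹
  1 - Dh * G.adjMatrix ℝ * Dh

/-- The second smallest eigenvalue (with multiplicity) of a Hermitian real matrix. -/
noncomputable def secondEig {V : Type*} [Fintype V] [DecidableEq V]
    (M : Matrix V V ℝ) (hM : M.IsHermitian) : ℝ :=
  ((Finset.univ.val.map hM.eigenvalues).sort (· ≤ ·)).getD 1 0

/-- The normalized Laplacian of the regularization `G^I` of `G`, obtained by adding
`d_max − deg(v)` self-loops at each vertex `v` (a loop adds 1 to the degree), so that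
every vertex has degree exactly `d_max`:
`L(G^I) = I − (1/d_max)·(A + diag(d_max − deg v))`. -/
noncomputable def normLapReg {V : Type*} [Fintype V] [DecidableEq V]
    (G : SimpleGraph V) [DecidableRel G.Adj] (dmax : ℕ) : Matrix V V ℝ :=
  1 - ((dmax : ℝ))⁻¹ •
    (G.adjMatrix ℝ + Matrix.diagonal fun v => ((dmax : ℝ) - (G.degree v : ℝ)))

namespace StmtTwoAux

open Matrix

variable {V : Type*} [Fintype V] [DecidableEq V]

set_option linter.unusedSectionVars false

lemma quad_expand {A : Matrix V V ℝ} (hA : A.IsHermitian) (x : V → ℝ) :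
    x ⬝ᵥ (A *ᵥ x) = ∑ i, hA.eigenvalues i * (⇑(hA.eigenvectorBasis i) ⬝ᵥ x) ^ 2 ∧
    x ⬝ᵥ x = ∑ i, (⇑(hA.eigenvectorBasis i) ⬝ᵥ x) ^ 2 := by
  set U := (hA.eigenvectorUnitary : Matrix V V ℝ) with hUdef
  set c : V → ℝ := fun i => ⇑(hA.eigenvectorBasis i) ⬝ᵥ x with hc
  have hsU : star U *ᵥ x = c := by
    funext i
    simp [hUdef, mulVec, dotProduct, Matrix.star_apply, hc]
  have hvm : x ᵥ* U = c := by
    funext i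
    simp [hUdef, vecMul, dotProduct, hc, mul_comm]
  have hUU : U * star U = 1 := mem_unitaryGroup_iff.mp hA.eigenvectorUnitary.2
  constructor
  · conv_lhs => rw [hA.spectral_theorem]
    rw [Unitary.conjStarAlgAut_apply, ← hUdef]
    rw [← mulVec_mulVec, ← mulVec_mulVec, hsU, dotProduct_mulVec, hvm]
    simp only [mulVec_diagonal, dotProduct, hc, Function.comp,
      RCLike.ofReal_real_eq_id, id]
    exact Finset.sum_congr rfl fun i _ => by ring
  · conv_lhs => rw [show x ⬝ᵥ x = x ⬝ᵥ ((U * star U) *ᵥ x) by rw [hUU, one_mulVec]]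
    rw [← mulVec_mulVec, hsU, dotProduct_mulVec, hvm]
    simp only [dotProduct, hc]
    exact Finset.sum_congr rfl fun i _ => by ring

lemma eig_orthonormal {A : Matrix V V ℝ} (hA : A.IsHermitian) (i j : V) :
    ⇑(hA.eigenvectorBasis i) ⬝ᵥ ⇑(hA.eigenvectorBasis j) = if i = j then 1 else 0 := by
  have h := (orthonormal_iff_ite.mp hA.eigenvectorBasis.orthonormal) i j
  simpa [PiLp.inner_apply, dotProduct, mul_comm] using h

lemma formB {A : Matrix V V ℝ} (hA : A.IsHermitian) {t : ℝ} (i₀ : V)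
    (h : ∀ i, i ≠ i₀ → t ≤ hA.eigenvalues i) (x : V → ℝ)
    (hx : ⇑(hA.eigenvectorBasis i₀) ⬝ᵥ x = 0) :
    t * (x ⬝ᵥ x) ≤ x ⬝ᵥ (A *ᵥ x) := by
  obtain ⟨h1, h2⟩ := quad_expand hA x
  rw [h1, h2, Finset.mul_sum]
  apply Finset.sum_le_sum
  intro i _
  by_cases hi : i = i₀
  · subst hi; rw [hx]; simp
  · exact mul_le_mul_of_nonneg_right (h i hi) (sq_nonneg _)

lemma formA {A : Matrix V V ℝ} (hA : A.IsHermitian) {t : ℝ} (w : V → ℝ)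
    (h : ∀ x : V → ℝ, w ⬝ᵥ x = 0 → t * (x ⬝ᵥ x) ≤ x ⬝ᵥ (A *ᵥ x)) :
    ∀ i j, i ≠ j → hA.eigenvalues i < t → hA.eigenvalues j < t → False := by
  intro i j hij hi hj
  set vi : V → ℝ := ⇑(hA.eigenvectorBasis i) with hvi
  set vj : V → ℝ := ⇑(hA.eigenvectorBasis j) with hvj
  have hii : vi ⬝ᵥ vi = 1 := by simpa using eig_orthonormal hA i i
  have hjj : vj ⬝ᵥ vj = 1 := by simpa using eig_orthonormal hA j j
  have hij' : vi ⬝ᵥ vj = 0 := by simpa [hij] using eig_orthonormal hA i j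
  have hji' : vj ⬝ᵥ vi = 0 := by simpa [hij.symm] using eig_orthonormal hA j i
  have hAvi : A *ᵥ vi = hA.eigenvalues i • vi := hA.mulVec_eigenvectorBasis i
  have hAvj : A *ᵥ vj = hA.eigenvalues j • vj := hA.mulVec_eigenvectorBasis j
  set a := w ⬝ᵥ vj with ha
  set b := w ⬝ᵥ vi with hb
  by_cases hab : a = 0 ∧ b = 0
  · have hx := h vi hab.2
    rw [hAvi, dotProduct_smul, hii] at hx
    simp only [smul_eq_mul, mul_one] at hx
    linarith
  · set x : V → ℝ := a • vi - b • vj with hxdef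
    have hwx : w ⬝ᵥ x = 0 := by
      simp [hxdef, dotProduct_sub, dotProduct_smul, ← ha, ← hb]; ring
    have hx1 : x ⬝ᵥ x = a ^ 2 + b ^ 2 := by
      simp [hxdef, dotProduct_sub, sub_dotProduct, dotProduct_smul, smul_dotProduct,
        hii, hjj, hij', hji']
      ring
    have hx2 : x ⬝ᵥ (A *ᵥ x) = hA.eigenvalues i * a ^ 2 + hA.eigenvalues j * b ^ 2 := by
      rw [hxdef, mulVec_sub, mulVec_smul, mulVec_smul, hAvi, hAvj]
      simp [dotProduct_sub, sub_dotProduct, dotProduct_smul, smul_dotProduct,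
        hii, hjj, hij', hji']
      ring
    have hform := h x hwx
    rw [hx1, hx2] at hform
    have hpos : 0 < a ^ 2 + b ^ 2 := by
      rcases not_and_or.mp hab with h' | h' <;> positivity
    have hkey : hA.eigenvalues i * a ^ 2 + hA.eigenvalues j * b ^ 2 < t * (a ^ 2 + b ^ 2) := by
      rcases lt_or_ge 0 (a ^ 2) with h' | h'
      · have h1 := mul_lt_mul_of_pos_right hi h'
        have h2 := mul_le_mul_of_nonneg_right hj.le (sq_nonneg b)
        nlinarith
      · have ha2 : a ^ 2 = 0 := le_antisymm h' (sq_nonneg a)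
        have hb2 : 0 < b ^ 2 := by nlinarith
        have h1 := mul_lt_mul_of_pos_right hj hb2
        nlinarith
    linarith

lemma countP_univ_map (f : V → ℝ) (t : ℝ) :
    Multiset.countP (fun x => x < t) (Finset.univ.val.map f)
      = (Finset.univ.filter (fun v => f v < t)).card := by
  rw [Multiset.countP_map]
  rfl

lemma sorted_getD_ge {t : ℝ} (f : V → ℝ) (hcard : 2 ≤ Fintype.card V)
    (h : ∀ i j : V, i ≠ j → f i < t → f j < t → False) :
    t ≤ ((Finset.univ.val.map f).sort (· ≤ ·)).getD 1 0 := by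
  have hfilt : (Finset.univ.filter (fun v => f v < t)).card ≤ 1 := by
    apply Finset.card_le_one.mpr
    intro a ha b hb
    simp only [Finset.mem_filter] at ha hb
    by_contra hne
    exact h a b hne ha.2 hb.2
  set l := ((Finset.univ.val.map f).sort (· ≤ ·)) with hl
  have hlen : l.length = Fintype.card V := by
    rw [hl, Multiset.length_sort, Multiset.card_map]; rfl
  have hsort : l.Pairwise (· ≤ ·) := Multiset.pairwise_sort _ _
  have hml : (l : Multiset ℝ) = Finset.univ.val.map f := Multiset.sort_eq _ _
  clear_value l
  match l, hlen, hsort, hml with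
  | [], hlen, _, _ => simp at hlen; omega
  | [a], hlen, _, _ => simp at hlen; omega
  | a :: b :: tl, hlen, hsort, hml =>
    show t ≤ b
    by_contra hbt
    push_neg at hbt
    have hab : a ≤ b := List.rel_of_pairwise_cons hsort (by simp)
    have hc : 2 ≤ Multiset.countP (fun x => x < t) (Finset.univ.val.map f) := by
      rw [← hml]
      have : ((a :: b :: tl : List ℝ) : Multiset ℝ) = a ::ₘ b ::ₘ (tl : Multiset ℝ) := rfl
      rw [this, Multiset.countP_cons, Multiset.countP_cons]
      have ha' : a < t := lt_of_le_of_lt hab hbt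
      simp [ha', hbt]
    rw [countP_univ_map] at hc
    omega

lemma exists_almost_all_ge {t : ℝ} (f : V → ℝ) (hcard : 2 ≤ Fintype.card V)
    (hge : t ≤ ((Finset.univ.val.map f).sort (· ≤ ·)).getD 1 0) :
    ∃ i₀ : V, ∀ i, i ≠ i₀ → t ≤ f i := by
  have hne : Nonempty V := Fintype.card_pos_iff.mp (by omega)
  have hfilt : (Finset.univ.filter (fun v => f v < t)).card ≤ 1 := by
    rw [← countP_univ_map]
    set l := ((Finset.univ.val.map f).sort (· ≤ ·)) with hl
    have hlen : l.length = Fintype.card V := by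
      rw [hl, Multiset.length_sort, Multiset.card_map]; rfl
    have hsort : l.Pairwise (· ≤ ·) := Multiset.pairwise_sort _ _
    have hml : (l : Multiset ℝ) = Finset.univ.val.map f := Multiset.sort_eq _ _
    clear_value l
    match l, hlen, hsort, hml, hge with
    | [], hlen, _, _, _ => simp at hlen; omega
    | [a], hlen, _, _, _ => simp at hlen; omega
    | a :: b :: tl, hlen, hsort, hml, hge =>
      have hbt : t ≤ b := hge
      rw [← hml]
      have : ((a :: b :: tl : List ℝ) : Multiset ℝ) = a ::ₘ b ::ₘ (tl : Multiset ℝ) := rfl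
      rw [this, Multiset.countP_cons, Multiset.countP_cons]
      have htl : Multiset.countP (fun x => x < t) (tl : Multiset ℝ) = 0 := by
        apply Multiset.countP_eq_zero.mpr
        intro x hx
        have hbx : b ≤ x := List.rel_of_pairwise_cons (List.Pairwise.of_cons hsort) (by
          simpa using hx)
        push_neg
        linarith
      rw [htl]
      have : ¬ (b < t) := by linarith
      simp [this]
      split <;> omega
  rcases Finset.eq_empty_or_nonempty (Finset.univ.filter (fun v => f v < t)) with he | ⟨i₀, hi₀⟩
  · exact ⟨Classical.arbitrary V, fun i _ => by
      by_contra hlt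
      push_neg at hlt
      have : i ∈ Finset.univ.filter (fun v => f v < t) := by simp [hlt]
      rw [he] at this; simp at this⟩
  · refine ⟨i₀, fun i hi => ?_⟩
    by_contra hlt
    push_neg at hlt
    have hmem : i ∈ Finset.univ.filter (fun v => f v < t) := by simp [hlt]
    have := Finset.card_le_one.mp hfilt i hmem i₀ hi₀
    exact hi this

lemma getD_small (f : V → ℝ) (hcard : Fintype.card V ≤ 1) :
    ((Finset.univ.val.map f).sort (· ≤ ·)).getD 1 0 = 0 := by
  set l := ((Finset.univ.val.map f).sort (· ≤ ·)) with hl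
  have hlen : l.length = Fintype.card V := by
    rw [hl, Multiset.length_sort, Multiset.card_map]; rfl
  clear_value l
  match l, hlen with
  | [], _ => rfl
  | [a], _ => rfl
  | a :: b :: tl, hlen => simp at hlen; omega

lemma getD_nonneg (f : V → ℝ) (hf : ∀ i, 0 ≤ f i) :
    0 ≤ ((Finset.univ.val.map f).sort (· ≤ ·)).getD 1 0 := by
  set l := ((Finset.univ.val.map f).sort (· ≤ ·)) with hl
  have hml : (l : Multiset ℝ) = Finset.univ.val.map f := Multiset.sort_eq _ _
  clear_value l
  match l, hml with
  | [], _ => exact le_refl 0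
  | [a], _ => exact le_refl 0
  | a :: b :: tl, hml =>
    show (0:ℝ) ≤ b
    have hb : b ∈ (Finset.univ.val.map f) := by
      rw [← hml]; simp
    obtain ⟨i, _, hi⟩ := Multiset.mem_map.mp hb
    rw [← hi]; exact hf i

lemma eigenvalues_nonneg_of_form {A : Matrix V V ℝ} (hA : A.IsHermitian)
    (h : ∀ x : V → ℝ, 0 ≤ x ⬝ᵥ (A *ᵥ x)) (i : V) : 0 ≤ hA.eigenvalues i := by
  rw [hA.eigenvalues_eq]
  simpa using h ⇑(hA.eigenvectorBasis i)

lemma normLapReg_eq {G : SimpleGraph V} [DecidableRel G.Adj] {dmax : ℕ}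
    (h : (dmax : ℝ) ≠ 0) :
    normLapReg G dmax = ((dmax : ℝ))⁻¹ • G.lapMatrix ℝ := by
  ext i j
  by_cases hij : i = j
  · subst hij
    simp [normLapReg, SimpleGraph.lapMatrix, SimpleGraph.degMatrix,
      Matrix.sub_apply, Matrix.smul_apply, Matrix.one_apply, Matrix.add_apply]
    field_simp
    ring
  · simp [normLapReg, SimpleGraph.lapMatrix, SimpleGraph.degMatrix,
      Matrix.sub_apply, Matrix.smul_apply, Matrix.one_apply, Matrix.add_apply,
      Matrix.diagonal_apply_ne _ hij, hij]

lemma lap_quad {G : SimpleGraph V} [DecidableRel G.Adj] (hd : ∀ v, 0 < G.degree v)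
    (x : V → ℝ) :
    (fun v => Real.sqrt (G.degree v) * x v) ⬝ᵥ
        (normLap G *ᵥ (fun v => Real.sqrt (G.degree v) * x v))
      = x ⬝ᵥ (G.lapMatrix ℝ *ᵥ x) := by
  set y : V → ℝ := fun v => Real.sqrt (G.degree v) * x v with hy
  set D : Matrix V V ℝ :=
    Matrix.diagonal fun v => if G.degree v = 0 then 0 else (Real.sqrt (G.degree v))⁻¹ with hD
  have hsqrt : ∀ v, Real.sqrt (G.degree v) ≠ 0 := fun v => by
    have := hd v
    positivity
  have hDy : D *ᵥ y = x := by
    funext v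
    rw [hD, mulVec_diagonal]
    rw [if_neg (hd v).ne', hy]
    exact inv_mul_cancel_left₀ (hsqrt v) _
  have hyD : ∀ z : V → ℝ, y ⬝ᵥ (D *ᵥ z) = x ⬝ᵥ z := by
    intro z
    simp only [dotProduct, hD, mulVec_diagonal]
    refine Finset.sum_congr rfl fun v _ => ?_
    rw [if_neg (hd v).ne', hy]
    show Real.sqrt (G.degree v) * x v * ((Real.sqrt (G.degree v))⁻¹ * z v) = x v * z v
    field_simp
    rw [div_eq_iff (hsqrt v)]
    ring
  have hnl : normLap G = 1 - D * G.adjMatrix ℝ * D := rfl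
  rw [hnl, sub_mulVec, one_mulVec, dotProduct_sub, ← mulVec_mulVec, ← mulVec_mulVec, hDy,
    hyD, SimpleGraph.lapMatrix, sub_mulVec, dotProduct_sub]
  congr 1
  rw [G.dotProduct_mulVec_degMatrix]
  simp only [dotProduct, hy]
  refine Finset.sum_congr rfl fun v _ => ?_
  have h1 : Real.sqrt (G.degree v) * Real.sqrt (G.degree v) = (G.degree v : ℝ) :=
    Real.mul_self_sqrt (by positivity)
  conv_rhs => rw [← h1]
  ring

end StmtTwoAux

open StmtTwoAux Matrix in
/-- if every degree of `G` lies in `[d_min, d_max]` and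
`λ₂(G) ≥ 9/10`, then the regularized graph `G^I` satisfies
`λ₂(G^I) ≥ (1/8)·(d_min/d_max)²`. -/
theorem stmt_2 {V : Type*} [Fintype V] [DecidableEq V]
    (G : SimpleGraph V) [DecidableRel G.Adj] (dmin dmax : ℕ)
    (hdeg : ∀ v : V, dmin ≤ G.degree v ∧ G.degree v ≤ dmax)
    (hL : (normLap G).IsHermitian)
    (hlam : secondEig (normLap G) hL ≥ 9 / 10)
    (hLI : (normLapReg G dmax).IsHermitian) :
    secondEig (normLapReg G dmax) hLI ≥ (1 / 8) * ((dmin : ℝ) / (dmax : ℝ)) ^ 2 := by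
  by_cases hVcard : Fintype.card V ≤ 1
  · exfalso
    rw [secondEig, getD_small _ hVcard] at hlam
    norm_num at hlam
  push_neg at hVcard
  have hV2 : 2 ≤ Fintype.card V := hVcard
  have hne : Nonempty V := Fintype.card_pos_iff.mp (by omega)
  obtain ⟨v₀⟩ := hne
  by_cases hdmin : dmin = 0
  · -- RHS is 0; just show secondEig ≥ 0 via PSD
    subst hdmin
    simp only [Nat.cast_zero, zero_div, ne_eq, OfNat.ofNat_ne_zero, not_false_eq_true,
      zero_pow, mul_zero]
    have hform : ∀ x : V → ℝ, 0 ≤ x ⬝ᵥ (normLapReg G dmax *ᵥ x) := by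
      intro x
      by_cases hdm : (dmax : ℝ) = 0
      · have h1 : normLapReg G dmax = 1 := by
          rw [normLapReg, hdm]
          simp
        rw [h1, one_mulVec]
        exact Finset.sum_nonneg fun i _ => mul_self_nonneg _
      · rw [normLapReg_eq hdm, smul_mulVec, dotProduct_smul, smul_eq_mul]
        have hpsd := (SimpleGraph.posSemidef_lapMatrix ℝ G).dotProduct_mulVec_nonneg x
        rw [star_trivial] at hpsd
        have : (0:ℝ) ≤ (dmax : ℝ)⁻¹ := by positivity
        exact mul_nonneg this hpsd
    exact getD_nonneg _ (eigenvalues_nonneg_of_form hLI hform)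
  · have hdmin1 : 1 ≤ dmin := Nat.one_le_iff_ne_zero.mpr hdmin
    have hdpos : ∀ v, 0 < G.degree v := fun v => lt_of_lt_of_le (by omega) (hdeg v).1
    have hdmaxpos : 0 < dmax := lt_of_lt_of_le (by omega : 0 < dmin) (le_trans (hdeg v₀).1 (hdeg v₀).2)
    have hdmaxR : (0:ℝ) < (dmax : ℝ) := by exact_mod_cast hdmaxpos
    have hdminR : (0:ℝ) < (dmin : ℝ) := by exact_mod_cast (by omega : 0 < dmin)
    -- extract eigenvector from hlam
    rw [secondEig] at hlam
    obtain ⟨i₀, hi₀⟩ := exists_almost_all_ge (t := 9/10) hL.eigenvalues hV2 hlam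
    set w : V → ℝ := ⇑(hL.eigenvectorBasis i₀) with hw
    set w2 : V → ℝ := fun v => Real.sqrt (G.degree v) * w v with hw2
    set t : ℝ := (9/10) * (dmin : ℝ) / (dmax : ℝ) with ht
    have hquad : ∀ x : V → ℝ, w2 ⬝ᵥ x = 0 →
        t * (x ⬝ᵥ x) ≤ x ⬝ᵥ (normLapReg G dmax *ᵥ x) := by
      intro x hx
      set y : V → ℝ := fun v => Real.sqrt (G.degree v) * x v with hy
      have hwy : w ⬝ᵥ y = 0 := by
        rw [← hx]
        simp only [dotProduct, hw2, hy]
        exact Finset.sum_congr rfl fun v _ => by ring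
      have hB := formB hL i₀ hi₀ y hwy
      have hident : y ⬝ᵥ (normLap G *ᵥ y) = x ⬝ᵥ (G.lapMatrix ℝ *ᵥ x) := lap_quad hdpos x
      have hyy : (dmin : ℝ) * (x ⬝ᵥ x) ≤ y ⬝ᵥ y := by
        simp only [dotProduct, hy, Finset.mul_sum]
        apply Finset.sum_le_sum
        intro v _
        have h1 : Real.sqrt (G.degree v) * Real.sqrt (G.degree v) = (G.degree v : ℝ) :=
          Real.mul_self_sqrt (by positivity)
        have h2 : (dmin : ℝ) ≤ (G.degree v : ℝ) := by exact_mod_cast (hdeg v).1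
        nlinarith [mul_self_nonneg (x v)]
      have hreg : x ⬝ᵥ (normLapReg G dmax *ᵥ x) = (dmax : ℝ)⁻¹ * (x ⬝ᵥ (G.lapMatrix ℝ *ᵥ x)) := by
        rw [normLapReg_eq hdmaxR.ne', smul_mulVec, dotProduct_smul, smul_eq_mul]
      rw [hreg, ← hident]
      have hxx : 0 ≤ x ⬝ᵥ x := Finset.sum_nonneg fun i _ => mul_self_nonneg _
      have hchain : (9/10) * ((dmin : ℝ) * (x ⬝ᵥ x)) ≤ y ⬝ᵥ (normLap G *ᵥ y) := by
        calc (9/10) * ((dmin : ℝ) * (x ⬝ᵥ x)) ≤ (9/10) * (y ⬝ᵥ y) := by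
              apply mul_le_mul_of_nonneg_left hyy (by norm_num)
          _ ≤ y ⬝ᵥ (normLap G *ᵥ y) := hB
      have heq : t * (x ⬝ᵥ x) = (dmax : ℝ)⁻¹ * ((9/10) * ((dmin : ℝ) * (x ⬝ᵥ x))) := by
        rw [ht]; ring
      rw [heq]
      exact mul_le_mul_of_nonneg_left hchain (inv_nonneg.mpr hdmaxR.le)
    have hA := formA hLI w2 hquad
    have hge : t ≤ secondEig (normLapReg G dmax) hLI := by
      rw [secondEig]
      exact sorted_getD_ge hLI.eigenvalues hV2 hA
    have hfinal : (1 / 8) * ((dmin : ℝ) / (dmax : ℝ)) ^ 2 ≤ t := by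
      rw [ht]
      have hr1 : (dmin : ℝ) / (dmax : ℝ) ≤ 1 := by
        rw [div_le_one hdmaxR]
        exact_mod_cast le_trans (hdeg v₀).1 (hdeg v₀).2
      have hr0 : 0 < (dmin : ℝ) / (dmax : ℝ) := div_pos hdminR hdmaxR
      have : (9:ℝ)/10 * (dmin : ℝ) / (dmax : ℝ) = (9/10) * ((dmin : ℝ) / (dmax : ℝ)) := by ring
      rw [this]
      nlinarith [hr0, hr1]
    linarith
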